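/- arXiv:1309.4546 — 4 statements merged into one kernel-verified Lean document; each statement's English description precedes it below -/
import Mathlib

section
/- Let F ∈ L²([-σ,σ]) (extended by zero to ℝ). Then the holomorphic Fourier transform f(z) = ∫_{-σ}^{σ} F(ξ) e^{-izξ} dξ defines an entire function of exponential type σ, i.e., there is a constant M with |f(z)| ≤ M e^{σ|z|} for all z ∈ ℂ. -/
open MeasureTheory Complex

theorem stmt_1 (σ : ℝ) (hσ : 0 < σ) (F : ℝ → ℂ)
    (hF : MeasureTheory.MemLp F 2 (MeasureTheory.volume : Measure ℝ))
    (hsupp : ∀ ξ : ℝ, ξ ∉ Set.Icc (-σ) σ → F ξ = 0)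
    (f : ℂ → ℂ)
    (hf : ∀ z : ℂ, f z = ∫ ξ in Set.Icc (-σ) σ, F ξ * Complex.exp (-Complex.I * z * ξ)) :
    Differentiable ℂ f ∧
      ∃ M : ℝ, ∀ z : ℂ, ‖f z‖ ≤ M * Real.exp (σ * ‖z‖) := by
  set μ : Measure ℝ := volume.restrict (Set.Icc (-σ) σ) with hμ
  have hfin : IsFiniteMeasure μ := by
    constructor
    rw [hμ, Measure.restrict_apply_univ, Real.volume_Icc]
    exact ENNReal.ofReal_lt_top
  have hFint : Integrable F μ := (hF.restrict _).integrable one_le_two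
  -- norm of the exponential
  have hexp : ∀ (x : ℂ) (ξ : ℝ), ξ ∈ Set.Icc (-σ) σ →
      ‖Complex.exp (-Complex.I * x * ξ)‖ ≤ Real.exp (σ * ‖x‖) := by
    intro x ξ hξ
    rw [Complex.norm_exp]
    apply Real.exp_le_exp.2
    have : (-Complex.I * x * ξ).re = ξ * x.im := by
      simp [Complex.mul_re, Complex.mul_im]
      ring
    rw [this]
    have h1 : |ξ| ≤ σ := abs_le.2 ⟨hξ.1, hξ.2⟩
    have h2 : |x.im| ≤ ‖x‖ := Complex.abs_im_le_norm x
    calc ξ * x.im ≤ |ξ * x.im| := le_abs_self _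
      _ = |ξ| * |x.im| := abs_mul _ _
      _ ≤ σ * ‖x‖ := by
          exact mul_le_mul h1 h2 (abs_nonneg _) hσ.le
  constructor
  · intro z₀
    have key := hasDerivAt_integral_of_dominated_loc_of_deriv_le
      (μ := μ) (F := fun (z : ℂ) (ξ : ℝ) => F ξ * Complex.exp (-Complex.I * z * ξ))
      (F' := fun (z : ℂ) (ξ : ℝ) => F ξ * ((-Complex.I * ξ) * Complex.exp (-Complex.I * z * ξ)))
      (x₀ := z₀) (s := Metric.ball z₀ 1) (bound := fun ξ => ‖F ξ‖ * (σ * Real.exp (σ * (‖z₀‖ + 1))))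
      (Metric.ball_mem_nhds z₀ one_pos)
      (Filter.Eventually.of_forall fun x => (hF.1.restrict).mul
        (Complex.continuous_exp.comp (by fun_prop)).aestronglyMeasurable)
      ?_ ?_ ?_ ?_ ?_
    · exact (key.2.congr_of_eventuallyEq
        (Filter.Eventually.of_forall fun x => hf x)).differentiableAt
    · refine Integrable.mono' (hFint.norm.mul_const (Real.exp (σ * ‖z₀‖)))
        ((hF.1.restrict).mul
          (Complex.continuous_exp.comp (by fun_prop)).aestronglyMeasurable) ?_
      filter_upwards [ae_restrict_mem measurableSet_Icc] with ξ hξ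
      rw [norm_mul]
      exact mul_le_mul_of_nonneg_left (hexp z₀ ξ hξ) (norm_nonneg _)
    · exact (hF.1.restrict).mul ((by fun_prop :
        Continuous fun ξ : ℝ => (-Complex.I * ξ) * Complex.exp (-Complex.I * z₀ * ξ))).aestronglyMeasurable
    · filter_upwards [ae_restrict_mem measurableSet_Icc] with ξ hξ x hx
      have hξσ : |ξ| ≤ σ := abs_le.2 ⟨hξ.1, hξ.2⟩
      have hxle : ‖x‖ ≤ ‖z₀‖ + 1 := by
        have h1 := mem_ball_iff_norm.1 hx
        calc ‖x‖ = ‖z₀ + (x - z₀)‖ := by rw [add_sub_cancel]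
          _ ≤ ‖z₀‖ + ‖x - z₀‖ := norm_add_le _ _
          _ ≤ ‖z₀‖ + 1 := add_le_add_right h1.le _
      rw [norm_mul, norm_mul]
      refine mul_le_mul_of_nonneg_left ?_ (norm_nonneg _)
      have e1 : ‖(-Complex.I * (ξ : ℂ))‖ ≤ σ := by simpa using hξσ
      have e2 : ‖Complex.exp (-Complex.I * x * ξ)‖ ≤ Real.exp (σ * (‖z₀‖ + 1)) :=
        (hexp x ξ hξ).trans (Real.exp_le_exp.2 (mul_le_mul_of_nonneg_left hxle hσ.le))
      exact mul_le_mul e1 e2 (norm_nonneg _) hσ.le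
    · exact (hFint.norm.mul_const _)
    · filter_upwards with ξ x hx
      have h1 : HasDerivAt (fun z : ℂ => -Complex.I * z * ξ) (-Complex.I * ξ) x := by
        simpa using ((hasDerivAt_id x).const_mul (-Complex.I)).mul_const (ξ : ℂ)
      have h2 := h1.cexp
      have h3 := h2.const_mul (F ξ)
      exact h3.congr_deriv (by ring)
  · refine ⟨∫ ξ, ‖F ξ‖ ∂μ, fun z => ?_⟩
    rw [hf z]
    have hb : Integrable (fun ξ => ‖F ξ‖ * Real.exp (σ * ‖z‖)) μ :=
      hFint.norm.mul_const _
    have key : ‖∫ ξ, F ξ * Complex.exp (-Complex.I * z * ξ) ∂μ‖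
        ≤ ∫ ξ, ‖F ξ‖ * Real.exp (σ * ‖z‖) ∂μ := by
      refine norm_integral_le_of_norm_le hb ?_
      filter_upwards [ae_restrict_mem measurableSet_Icc] with ξ hξ
      rw [norm_mul]
      exact mul_le_mul_of_nonneg_left (hexp z ξ hξ) (norm_nonneg _)
    rw [integral_mul_const] at key
    exact key
end

section
/- For all x ∈ ℝ, the sum 2 Σ_{m∈ℤ} |(a x - π m)^{-2} (cos((a x - π m)/2) - cos(a x - π m))| is bounded above by (4/π²)(π²/6 - 1) + 2/3 + 2(2·(3/8) + 2/π²), which is less than 2.84. -/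
open Real

noncomputable def summand5 (u : ℝ) : ℝ :=
  if u = 0 then 3 / 8 else |(Real.cos (u / 2) - Real.cos u) / u ^ 2|

lemma summand5_nonneg (u : ℝ) : 0 ≤ summand5 u := by
  unfold summand5; split_ifs
  · norm_num
  · exact abs_nonneg _

lemma summand5_le (u : ℝ) : summand5 u ≤ 3 / 8 := by
  unfold summand5; split_ifs with h
  · exact le_refl _
  · have h1 : Real.cos (u / 2) - Real.cos u = 2 * Real.sin (3 * u / 4) * Real.sin (u / 4) := by
      rw [Real.cos_sub_cos, show (u / 2 - u) / 2 = -(u / 4) by ring, Real.sin_neg,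
        show (u / 2 + u) / 2 = 3 * u / 4 by ring]
      ring
    have hu2 : (0:ℝ) < u ^ 2 := by positivity
    have e1 : |3 * u / 4| = 3 * |u| / 4 := by
      rw [abs_div, abs_mul]; norm_num
    have e2 : |u / 4| = |u| / 4 := by
      rw [abs_div]; norm_num
    have s1 : |Real.sin (3 * u / 4)| ≤ |3 * u / 4| := Real.abs_sin_le_abs
    have s2 : |Real.sin (u / 4)| ≤ |u / 4| := Real.abs_sin_le_abs
    have h2 : |Real.cos (u / 2) - Real.cos u| ≤ 3 / 8 * u ^ 2 := by
      rw [h1]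
      calc |2 * Real.sin (3 * u / 4) * Real.sin (u / 4)|
          = 2 * |Real.sin (3 * u / 4)| * |Real.sin (u / 4)| := by
            rw [abs_mul, abs_mul]; norm_num
        _ ≤ 2 * |3 * u / 4| * |u / 4| := by
            nlinarith [abs_nonneg (Real.sin (u / 4)), abs_nonneg (3 * u / 4),
              abs_nonneg (Real.sin (3 * u / 4)), abs_nonneg (u / 4)]
        _ = 3 / 8 * |u| ^ 2 := by rw [e1, e2]; ring
        _ = 3 / 8 * u ^ 2 := by rw [sq_abs]
    rw [abs_div, abs_of_nonneg hu2.le, div_le_iff₀ hu2]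
    linarith

lemma summand5_le_div (u : ℝ) (hu : u ≠ 0) : summand5 u ≤ 2 / u ^ 2 := by
  unfold summand5
  rw [if_neg hu]
  have hu2 : (0:ℝ) < u ^ 2 := by positivity
  rw [abs_div, abs_of_nonneg hu2.le]
  gcongr
  calc |Real.cos (u / 2) - Real.cos u| ≤ |Real.cos (u / 2)| + |Real.cos u| := abs_sub _ _
    _ ≤ 2 := by
        have := Real.abs_cos_le_one (u / 2)
        have := Real.abs_cos_le_one u
        linarith

/-- the majorant -/
noncomputable def maj5 : ℤ → ℝ := fun m =>
  if m = 0 ∨ m = 1 then 3 / 8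
  else 2 / (Real.pi * (if 0 < m then (m : ℝ) - 1 else -(m : ℝ))) ^ 2

lemma gfun_hasSum : HasSum (fun n : ℕ => 2 / (Real.pi * (n : ℝ)) ^ 2) (1 / 3) := by
  have h := (hasSum_zeta_two).mul_left (2 / Real.pi ^ 2)
  have hv : 2 / Real.pi ^ 2 * (Real.pi ^ 2 / 6) = 1 / 3 := by
    field_simp
    ring
  rw [hv] at h
  convert h using 1
  · rfl
  funext n
  rw [mul_pow, div_mul_div_comm]
  norm_num

lemma maj5_hasSum : HasSum maj5 (17 / 12) := by
  have h₁ : HasSum (fun n : ℕ => maj5 n) (3 / 4 + 1 / 3) := by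
    have e : (fun n : ℕ => maj5 n) =
        (fun n : ℕ => (if n = 0 ∨ n = 1 then (3 / 8 : ℝ) else 0) +
          2 / (Real.pi * ((n - 1 : ℕ) : ℝ)) ^ 2) := by
      funext n
      unfold maj5
      rcases n with _ | _ | n
      · norm_num
      · norm_num
      · rw [if_neg (show ¬(((n+1+1 : ℕ) : ℤ) = 0 ∨ ((n+1+1 : ℕ) : ℤ) = 1) by omega),
          if_pos (show (0:ℤ) < ((n+1+1 : ℕ) : ℤ) by omega)]
        simp only [Nat.add_sub_cancel]
        norm_num
    rw [e]
    have hind : HasSum (fun n : ℕ => if n = 0 ∨ n = 1 then (3 / 8 : ℝ) else 0) (3 / 4) := by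
      have := hasSum_sum_of_ne_finset_zero (L := SummationFilter.unconditional ℕ) (s := ({0, 1} : Finset ℕ))
        (f := fun n : ℕ => if n = 0 ∨ n = 1 then (3 / 8 : ℝ) else 0)
        (by intro b hb
            simp only [Finset.mem_insert, Finset.mem_singleton] at hb
            show (if b = 0 ∨ b = 1 then (3 / 8 : ℝ) else 0) = 0
            exact if_neg (by tauto))
      convert this using 1
      norm_num
    have hsh : HasSum (fun n : ℕ => 2 / (Real.pi * ((n - 1 : ℕ) : ℝ)) ^ 2) (1 / 3) := by
      have h1 : HasSum (fun n : ℕ => 2 / (Real.pi * ((n + 1 - 1 : ℕ) : ℝ)) ^ 2) (1 / 3) := by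
        simpa using gfun_hasSum
      have h2 := (hasSum_nat_add_iff
        (f := fun n : ℕ => 2 / (Real.pi * ((n - 1 : ℕ) : ℝ)) ^ 2) 1).mp h1
      simpa using h2
    exact hind.add hsh
  have h₂ : HasSum (fun n : ℕ => maj5 (-(n + 1))) (1 / 3) := by
    have e : (fun n : ℕ => maj5 (-(n + 1))) =
        (fun n : ℕ => 2 / (Real.pi * (((n : ℕ) + 1 : ℕ) : ℝ)) ^ 2) := by
      funext n
      unfold maj5
      rw [if_neg (by omega), if_neg (by omega)]
      push_cast
      ring_nf
    rw [e]
    have h2 := (hasSum_nat_add_iff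
      (f := fun n : ℕ => 2 / (Real.pi * ((n : ℕ) : ℝ)) ^ 2) 1).mpr
      (by simpa using gfun_hasSum)
    simpa using h2
  have := h₁.of_nat_of_neg_add_one h₂
  convert this using 1
  norm_num

theorem stmt_5 (a : ℝ) (ha : 0 < a) (x : ℝ) :
    2 * (∑' m : ℤ, summand5 (a * x - Real.pi * m)) ≤
      (4 / Real.pi ^ 2) * (Real.pi ^ 2 / 6 - 1) + 2 / 3 +
        2 * (2 * (3 / 8) + 2 / Real.pi ^ 2) ∧
    (4 / Real.pi ^ 2) * (Real.pi ^ 2 / 6 - 1) + 2 / 3 +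
        2 * (2 * (3 / 8) + 2 / Real.pi ^ 2) < 2.84 := by
  have hπ : (0:ℝ) < Real.pi := Real.pi_pos
  have hrhs : (4 / Real.pi ^ 2) * (Real.pi ^ 2 / 6 - 1) + 2 / 3 +
      2 * (2 * (3 / 8) + 2 / Real.pi ^ 2) = 17 / 6 := by
    field_simp
    ring
  set n : ℤ := ⌊a * x / Real.pi⌋ with hn
  set r : ℝ := a * x - Real.pi * n with hr
  have hr0 : 0 ≤ r := by
    rw [hr]
    have := Int.sub_floor_div_mul_nonneg (a * x) hπ
    simpa [mul_comm] using this
  have hr1 : r < Real.pi := by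
    rw [hr]
    have := Int.sub_floor_div_mul_lt (a * x) hπ
    simpa [mul_comm] using this
  have hrw : (∑' m : ℤ, summand5 (a * x - Real.pi * m)) =
      ∑' m : ℤ, summand5 (r - Real.pi * m) := by
    rw [← (Equiv.addRight n).tsum_eq (fun m : ℤ => summand5 (a * x - Real.pi * m))]
    congr 1
    funext m
    simp only [Equiv.coe_addRight]
    congr 1
    rw [hr]
    push_cast
    ring
  have hbound : ∀ m : ℤ, summand5 (r - Real.pi * m) ≤ maj5 m := by
    intro m
    unfold maj5
    split_ifs with h h2
    · rcases h with h | h <;> (subst h; push_cast; simpa using summand5_le _)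
    · have hm2 : (2:ℤ) ≤ m := by omega
      have hmr : (2:ℝ) ≤ (m:ℝ) := by exact_mod_cast hm2
      have hdpos : 0 < Real.pi * ((m:ℝ) - 1) := by nlinarith
      have hne : r - Real.pi * m ≠ 0 := by nlinarith
      calc summand5 (r - Real.pi * m) ≤ 2 / (r - Real.pi * m) ^ 2 :=
            summand5_le_div _ hne
        _ ≤ 2 / (Real.pi * ((m:ℝ) - 1)) ^ 2 := by
            apply div_le_div_of_nonneg_left (by norm_num) (by positivity)
            nlinarith
    · have hm : m ≤ -1 := by omega
      have hmr : (m:ℝ) ≤ -1 := by exact_mod_cast hm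
      have hdpos : 0 < Real.pi * (-(m:ℝ)) := by nlinarith
      have hne : r - Real.pi * m ≠ 0 := by nlinarith
      calc summand5 (r - Real.pi * m) ≤ 2 / (r - Real.pi * m) ^ 2 :=
            summand5_le_div _ hne
        _ ≤ 2 / (Real.pi * (-(m:ℝ))) ^ 2 := by
            apply div_le_div_of_nonneg_left (by norm_num) (by positivity)
            nlinarith
  have hsummable : Summable (fun m : ℤ => summand5 (r - Real.pi * m)) :=
    Summable.of_nonneg_of_le (fun m => summand5_nonneg _) hbound maj5_hasSum.summable
  have hle : (∑' m : ℤ, summand5 (r - Real.pi * m)) ≤ 17 / 12 := by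
    rw [← maj5_hasSum.tsum_eq]
    exact Summable.tsum_le_tsum hbound hsummable maj5_hasSum.summable
  constructor
  · rw [hrhs, hrw]
    linarith
  · rw [hrhs]
    norm_num
end

section
/- For all real u ≠ 0, |(cos(u/2) - cos u)/u²| ≤ 3/8, and the function extends continuously to u = 0 with value 3/8. -/
open Real Filter

lemma key_eq (u : ℝ) : Real.cos (u / 2) - Real.cos u
    = 2 * Real.sin (3 * u / 4) * Real.sin (u / 4) := by
  rw [Real.cos_sub_cos]
  have h1 : (u / 2 + u) / 2 = 3 * u / 4 := by ring
  have h2 : (u / 2 - u) / 2 = -(u / 4) := by ring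
  rw [h1, h2, Real.sin_neg]
  ring

lemma sin_mul_div_tendsto (c : ℝ) (hc : c ≠ 0) :
    Filter.Tendsto (fun u : ℝ => Real.sin (c * u) / (c * u)) (nhdsWithin 0 {0}ᶜ) (nhds 1) := by
  have hsin : Filter.Tendsto (fun x : ℝ => Real.sin x / x) (nhdsWithin 0 {0}ᶜ) (nhds 1) := by
    simpa [slope_fun_def, div_eq_inv_mul] using
      (hasDerivAt_iff_tendsto_slope.mp (Real.hasDerivAt_sin 0))
  have hmap : Filter.Tendsto (fun u : ℝ => c * u) (nhdsWithin 0 {0}ᶜ) (nhdsWithin 0 {0}ᶜ) := by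
    apply tendsto_nhdsWithin_of_tendsto_nhds_of_eventually_within
    · have : Filter.Tendsto (fun u : ℝ => c * u) (nhds 0) (nhds (c * 0)) :=
        tendsto_const_nhds.mul tendsto_id
      simpa using this.mono_left nhdsWithin_le_nhds
    · filter_upwards [self_mem_nhdsWithin] with u hu
      simp only [Set.mem_compl_iff, Set.mem_singleton_iff] at hu ⊢
      exact mul_ne_zero hc hu
  exact hsin.comp hmap

theorem stmt_6 :
    (∀ u : ℝ, u ≠ 0 → |(Real.cos (u / 2) - Real.cos u) / u ^ 2| ≤ 3 / 8) ∧
      Filter.Tendsto (fun u : ℝ => (Real.cos (u / 2) - Real.cos u) / u ^ 2)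
        (nhdsWithin 0 {0}ᶜ) (nhds (3 / 8)) := by
  constructor
  · intro u hu
    have hu2 : (0:ℝ) < u ^ 2 := by positivity
    rw [abs_div, abs_of_pos hu2, div_le_iff₀ hu2, key_eq]
    have h1 : |Real.sin (3 * u / 4)| ≤ |3 * u / 4| := Real.abs_sin_le_abs
    have h2 : |Real.sin (u / 4)| ≤ |u / 4| := Real.abs_sin_le_abs
    calc |2 * Real.sin (3 * u / 4) * Real.sin (u / 4)|
        = 2 * |Real.sin (3 * u / 4)| * |Real.sin (u / 4)| := by
          rw [abs_mul, abs_mul]; norm_num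
      _ ≤ 2 * |3 * u / 4| * |u / 4| := by
          apply mul_le_mul _ h2 (abs_nonneg _) (by positivity)
          exact mul_le_mul_of_nonneg_left h1 (by norm_num)
      _ = 3 / 8 * u ^ 2 := by
          have e1 : |3 * u / 4| = 3 * |u| / 4 := by
            rw [abs_div, abs_mul]; norm_num
          have e2 : |u / 4| = |u| / 4 := by
            rw [abs_div]; norm_num
          rw [e1, e2, ← sq_abs u]; ring
  · have h1 := sin_mul_div_tendsto (3/4) (by norm_num)
    have h2 := sin_mul_div_tendsto (1/4) (by norm_num)
    have key : Filter.Tendsto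
        (fun u : ℝ => 3/8 * (Real.sin (3/4 * u) / (3/4 * u) * (Real.sin (1/4 * u) / (1/4 * u))))
        (nhdsWithin 0 {0}ᶜ) (nhds (3/8)) := by
      have := (h1.mul h2).const_mul (3/8 : ℝ)
      simpa using this
    refine key.congr' ?_
    filter_upwards [self_mem_nhdsWithin] with u hu
    simp only [Set.mem_compl_iff, Set.mem_singleton_iff] at hu
    rw [key_eq]
    field_simp
    ring
end

section
/- Suppose Φ : ℂ → ℂ is holomorphic on the strip |Im z| ≤ δ, Φ restricted to every horizontal line ℝ + iα (|α| ≤ δ) is integrable, and Φ(x + iα) → 0 as |x| → ∞ uniformly for |α| ≤ δ. Then for every α with |α| < δ, ∫_ℝ e^{ixu} Φ(x) dx = e^{-αu} ∫_ℝ e^{izu} Φ(z + iα) dz for all u ∈ ℝ. -/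
open MeasureTheory Complex Set Filter Topology
open scoped Interval

theorem stmt_15 (δ : ℝ) (hδ : 0 < δ) (Φ : ℂ → ℂ)
    (hdiff : DifferentiableOn ℂ Φ {z : ℂ | |z.im| ≤ δ})
    (hint : ∀ α : ℝ, |α| ≤ δ →
      MeasureTheory.Integrable (fun x : ℝ => Φ (x + α * Complex.I)))
    (hdecay : ∀ ε : ℝ, 0 < ε → ∃ R : ℝ, ∀ x α : ℝ, |α| ≤ δ → R ≤ |x| →
      ‖Φ (x + α * Complex.I)‖ ≤ ε) :
    ∀ α : ℝ, |α| < δ → ∀ u : ℝ,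
      (∫ x : ℝ, Complex.exp (Complex.I * x * u) * Φ x) =
        Complex.exp (-(α : ℂ) * u) *
          ∫ x : ℝ, Complex.exp (Complex.I * x * u) * Φ (x + α * Complex.I) := by
  intro α hα u
  set g : ℂ → ℂ := fun z => Complex.exp (Complex.I * z * u) * Φ z with hg
  have hexp : ∀ β x : ℝ, Complex.exp (Complex.I * ((x : ℂ) + β * Complex.I) * u)
      = Complex.exp (-(β : ℂ) * u) * Complex.exp (Complex.I * x * u) := by
    intro β x
    rw [← Complex.exp_add]
    congr 1
    have h : Complex.I * Complex.I = -1 := Complex.I_mul_I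
    ring_nf
    linear_combination (↑β * ↑u : ℂ) * h
  have hmeas : AEStronglyMeasurable (fun x : ℝ => Complex.exp (Complex.I * x * u)) volume :=
    (Complex.continuous_exp.comp (by continuity)).aestronglyMeasurable
  -- integrability on horizontal lines
  have hint' : ∀ β : ℝ, |β| ≤ δ →
      Integrable (fun x : ℝ => Complex.exp (Complex.I * x * u) * Φ ((x : ℂ) + β * Complex.I)) := by
    intro β hβ
    refine (hint β hβ).bdd_mul (c := 1) hmeas (Eventually.of_forall fun x => ?_)
    rw [Complex.norm_exp]
    simp
  have hginteg : ∀ β : ℝ, |β| ≤ δ →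
      Integrable (fun x : ℝ => g ((x : ℂ) + β * Complex.I)) := by
    intro β hβ
    refine ((hint' β hβ).const_mul (Complex.exp (-(β : ℂ) * u))).congr
      (Eventually.of_forall fun x => ?_)
    simp only [g]
    rw [hexp β x]; ring
  have hginteg0 : Integrable (fun x : ℝ => g (x : ℂ)) := by
    refine (hginteg 0 (by simpa using hδ.le)).congr (Eventually.of_forall fun x => ?_)
    norm_num
  -- norm of g on the strip
  have hnorm : ∀ s y : ℝ, ‖g ((s : ℂ) + y * Complex.I)‖
      = Real.exp (-(y * u)) * ‖Φ ((s : ℂ) + y * Complex.I)‖ := by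
    intro s y
    rw [hg]
    simp only [norm_mul, Complex.norm_exp]
    congr 2
    simp [Complex.mul_re, Complex.mul_im]
  -- Cauchy theorem on rectangles
  have key : ∀ T : ℝ,
      (∫ x : ℝ in -T..T, g x) - (∫ x : ℝ in -T..T, g (x + α * Complex.I))
        + Complex.I • (∫ y : ℝ in (0:ℝ)..α, g (T + y * Complex.I))
        - Complex.I • (∫ y : ℝ in (0:ℝ)..α, g (-T + y * Complex.I)) = 0 := by
    intro T
    have hsub : ([[((-T : ℂ)).re, ((T : ℂ) + α * Complex.I).re]]
        ×ℂ [[((-T : ℂ)).im, ((T : ℂ) + α * Complex.I).im]]) ⊆ {z : ℂ | |z.im| ≤ δ} := by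
      intro z hz
      have him : z.im ∈ [[((-T : ℂ)).im, ((T : ℂ) + α * Complex.I).im]] := hz.2
      simp only [Complex.neg_im, Complex.ofReal_im, neg_zero, Complex.add_im,
        Complex.mul_im, Complex.I_im, Complex.I_re, Complex.ofReal_re, mul_one,
        mul_zero, add_zero, zero_add] at him
      have h2 : min 0 α ≤ z.im ∧ z.im ≤ max 0 α := by
        simpa [Set.uIcc, Set.mem_Icc] using him
      have h1 : |z.im| ≤ |α| := abs_le.2
        ⟨le_trans (le_min (neg_nonpos_of_nonneg (abs_nonneg α)) (neg_abs_le α)) h2.1,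
          le_trans h2.2 (max_le (abs_nonneg α) (le_abs_self α))⟩
      exact le_trans h1 hα.le
    have hd : DifferentiableOn ℂ g ([[((-T : ℂ)).re, ((T : ℂ) + α * Complex.I).re]]
        ×ℂ [[((-T : ℂ)).im, ((T : ℂ) + α * Complex.I).im]]) := by
      apply DifferentiableOn.mul
      · exact (Complex.differentiable_exp.comp (by fun_prop)).differentiableOn
      · exact hdiff.mono hsub
    have := Complex.integral_boundary_rect_eq_zero_of_differentiableOn g (-T)
      (T + α * Complex.I) hd
    simpa only [Complex.neg_im, Complex.ofReal_im, neg_zero, Complex.ofReal_zero,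
      zero_mul, add_zero, Complex.neg_re, Complex.ofReal_re, Complex.add_re,
      Complex.mul_re, Complex.I_re, mul_zero, Complex.I_im, Complex.ofReal_neg,
      mul_one, tsub_zero, Complex.add_im, Complex.mul_im, zero_add] using this
  -- vertical integrals tend to 0
  set V : ℝ → ℂ := fun T =>
    Complex.I • (∫ y : ℝ in (0:ℝ)..α, g (T + y * Complex.I))
      - Complex.I • (∫ y : ℝ in (0:ℝ)..α, g (-T + y * Complex.I)) with hV
  have hVtend : Tendsto V atTop (𝓝 0) := by
    rw [NormedAddCommGroup.tendsto_nhds_zero]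
    intro ε hε
    set C₀ : ℝ := Real.exp (|α| * |u|) with hC₀
    have hC₀pos : 0 < C₀ := Real.exp_pos _
    set ε' : ℝ := ε / (2 * (|α| + 1) * C₀) with hε'
    have hε'pos : 0 < ε' := by
      apply div_pos hε
      positivity
    obtain ⟨R, hR⟩ := hdecay ε' hε'pos
    filter_upwards [eventually_ge_atTop (max R 0)] with T hT
    have hT0 : 0 ≤ T := le_trans (le_max_right R 0) hT
    have hTR : R ≤ |T| := by rw [_root_.abs_of_nonneg hT0]; exact le_trans (le_max_left R 0) hT
    have hTR' : R ≤ |(-T)| := by rwa [abs_neg]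
    have hside : ∀ s : ℝ, R ≤ |s| →
        ‖∫ y : ℝ in (0:ℝ)..α, g (s + y * Complex.I)‖ ≤ ε' * C₀ * |α| := by
      intro s hs
      have := intervalIntegral.norm_integral_le_of_norm_le_const
        (a := (0:ℝ)) (b := α) (C := ε' * C₀)
        (f := fun y : ℝ => g (s + y * Complex.I)) ?_
      · simpa using this
      · intro y hy
        have hy' : |y| ≤ |α| := by
          rcases Set.mem_uIoc.1 hy with h | h
          · rw [_root_.abs_of_pos h.1]; exact le_trans h.2 (le_abs_self α)
          · rw [_root_.abs_of_nonpos h.2]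
            exact le_trans (neg_le_neg h.1.le) (neg_le_abs α)
        have hyδ : |y| ≤ δ := le_trans hy' hα.le
        have hΦ := hR s y hyδ hs
        rw [hnorm s y]
        have hexp_le : Real.exp (-(y * u)) ≤ C₀ := by
          apply Real.exp_le_exp.2
          calc -(y * u) ≤ |y * u| := neg_le_abs _
            _ = |y| * |u| := abs_mul y u
            _ ≤ |α| * |u| := by
                apply mul_le_mul_of_nonneg_right hy' (abs_nonneg u)
        calc Real.exp (-(y * u)) * ‖Φ (s + y * Complex.I)‖
            ≤ C₀ * ε' := mul_le_mul hexp_le hΦ (norm_nonneg _) hC₀pos.le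
          _ = ε' * C₀ := mul_comm _ _
    have h1 := hside T hTR
    have h2 := hside (-T) hTR'
    have hVnorm : ‖V T‖ ≤ 2 * (ε' * C₀ * |α|) := by
      rw [hV]
      refine le_trans (norm_sub_le _ _) ?_
      rw [norm_smul, norm_smul]
      simp only [Complex.norm_I, one_mul]
      have h2' : ‖∫ y : ℝ in (0:ℝ)..α, g ((-T : ℝ) + y * Complex.I)‖ ≤ ε' * C₀ * |α| := h2
      push_cast at h2' ⊢
      linarith
    have hfinal : 2 * (ε' * C₀ * |α|) < ε := by
      have : ε' * (2 * (|α| + 1) * C₀) = ε := by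
        rw [hε']; field_simp
      nlinarith [mul_pos hε'pos hC₀pos]
    exact lt_of_le_of_lt hVnorm hfinal
  -- limits of horizontal integrals
  have hT1 : Tendsto (fun T : ℝ => ∫ x : ℝ in -T..T, g x) atTop (𝓝 (∫ x : ℝ, g x)) :=
    intervalIntegral_tendsto_integral hginteg0 tendsto_neg_atTop_atBot tendsto_id
  have hT2 : Tendsto (fun T : ℝ => ∫ x : ℝ in -T..T, g (x + α * Complex.I)) atTop
      (𝓝 (∫ x : ℝ, g (x + α * Complex.I))) :=
    intervalIntegral_tendsto_integral (hginteg α hα.le) tendsto_neg_atTop_atBot tendsto_id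
  have heq : (fun T : ℝ => ∫ x : ℝ in -T..T, g x)
      = fun T : ℝ => (∫ x : ℝ in -T..T, g (x + α * Complex.I)) - V T := by
    funext T
    have h := key T
    simp only [smul_eq_mul] at h
    rw [hV]
    simp only [smul_eq_mul]
    linear_combination h
  rw [heq] at hT1
  have hlim : (∫ x : ℝ, g x) = ∫ x : ℝ, g (x + α * Complex.I) := by
    have := (hT2.sub hVtend)
    rw [sub_zero] at this
    exact tendsto_nhds_unique hT1 this
  calc (∫ x : ℝ, Complex.exp (Complex.I * x * u) * Φ x) = ∫ x : ℝ, g x := rfl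
    _ = ∫ x : ℝ, g (x + α * Complex.I) := hlim
    _ = ∫ x : ℝ, Complex.exp (-(α : ℂ) * u) * (Complex.exp (Complex.I * x * u)
          * Φ (x + α * Complex.I)) := by
        congr 1; funext x; simp only [g]; rw [hexp α x]; ring
    _ = Complex.exp (-(α : ℂ) * u) *
          ∫ x : ℝ, Complex.exp (Complex.I * x * u) * Φ (x + α * Complex.I) :=
        integral_const_mul _ _
end
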